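/- (Optimality of BSC reverse test channels) Let X be Bernoulli(1/2), let the channel P_{X|X̃} from X̃ to X be a BSC with crossover probability p ∈ [0,1/2), and fix a target conditional entropy value h = H(X|U) ∈ [H_b(p), 1] for an auxiliary U with U − X̃ − X Markov. Then H(X̃|U) ≤ H_b( (H_b⁻¹(h) − p)/(1 − 2p) ), and this bound is achieved when P_{X̃|U} is a BSC with crossover probability x̃ = (H_b⁻¹(h) − p)/(1 − 2p). -/

import Mathlib

open scoped BigOperators

noncomputable def Hb (x : ℝ) : ℝ := -(x * Real.logb 2 x) - (1 - x) * Real.logb 2 (1 - x)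

noncomputable def star (p q : ℝ) : ℝ := p * (1 - q) + (1 - p) * q

structure FinProb (Ω : Type) [Fintype Ω] where
  p : Ω → ℝ
  nonneg : ∀ ω, 0 ≤ p ω
  sum_one : ∑ ω, p ω = 1

noncomputable def pmfOf {Ω α : Type} [Fintype Ω] [DecidableEq α]
    (μ : FinProb Ω) (X : Ω → α) (a : α) : ℝ :=
  ∑ ω, if X ω = a then μ.p ω else 0

noncomputable def H2 {Ω α : Type} [Fintype Ω] [Fintype α] [DecidableEq α]
    (μ : FinProb Ω) (X : Ω → α) : ℝ :=
  -∑ a, pmfOf μ X a * Real.logb 2 (pmfOf μ X a)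

noncomputable def condH2 {Ω α β : Type} [Fintype Ω] [Fintype α] [Fintype β]
    [DecidableEq α] [DecidableEq β] (μ : FinProb Ω) (X : Ω → α) (Y : Ω → β) : ℝ :=
  H2 μ (fun ω => (X ω, Y ω)) - H2 μ Y

noncomputable def MI2 {Ω α β : Type} [Fintype Ω] [Fintype α] [Fintype β]
    [DecidableEq α] [DecidableEq β] (μ : FinProb Ω) (X : Ω → α) (Y : Ω → β) : ℝ :=
  H2 μ X + H2 μ Y - H2 μ (fun ω => (X ω, Y ω))

def Markov3 {Ω α β γ : Type} [Fintype Ω] [DecidableEq α] [DecidableEq β] [DecidableEq γ]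
    (μ : FinProb Ω) (X : Ω → α) (Y : Ω → β) (Z : Ω → γ) : Prop :=
  ∀ a b c, pmfOf μ (fun ω => (X ω, Y ω, Z ω)) (a, b, c) * pmfOf μ Y b =
    pmfOf μ (fun ω => (X ω, Y ω)) (a, b) * pmfOf μ (fun ω => (Y ω, Z ω)) (b, c)

/-! ### Auxiliary analytic lemmas -/

open Set

lemma Hb_eq (x : ℝ) : Hb x = Real.binEntropy x / Real.log 2 := by
  unfold Hb Real.binEntropy Real.logb
  rw [Real.log_inv, Real.log_inv]
  ring

lemma log2_pos : (0:ℝ) < Real.log 2 := Real.log_pos (by norm_num)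

lemma Hb_continuous : Continuous Hb := by
  have : Hb = fun x => Real.binEntropy x / Real.log 2 := funext Hb_eq
  rw [this]; exact Real.binEntropy_continuous.div_const _

lemma Hb_symm (x : ℝ) : Hb (1 - x) = Hb x := by
  rw [Hb_eq, Hb_eq, Real.binEntropy_one_sub]

lemma Hb_zero : Hb 0 = 0 := by simp [Hb]

lemma Hb_one : Hb 1 = 0 := by simp [Hb]

lemma Hb_half : Hb (1/2) = 1 := by
  rw [Hb_eq, show (1:ℝ)/2 = 2⁻¹ by norm_num, Real.binEntropy_two_inv,
    div_self (ne_of_gt log2_pos)]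

lemma Hb_nonneg {x : ℝ} (h0 : 0 ≤ x) (h1 : x ≤ 1) : 0 ≤ Hb x := by
  rw [Hb_eq]; exact div_nonneg (Real.binEntropy_nonneg h0 h1) log2_pos.le

lemma Hb_le_one (x : ℝ) : Hb x ≤ 1 := by
  rw [Hb_eq, div_le_one log2_pos]; exact Real.binEntropy_le_log_two

lemma Hb_strictMonoOn : StrictMonoOn Hb (Set.Icc 0 (1/2)) := by
  have h : (1:ℝ)/2 = 2⁻¹ := by norm_num
  intro x hx y hy hxy
  rw [Hb_eq, Hb_eq, div_lt_div_iff_of_pos_right log2_pos]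
  exact Real.binEntropy_strictMonoOn (by rw [← h]; exact hx) (by rw [← h]; exact hy) hxy

lemma Hb_hasDerivAt {x : ℝ} (h0 : x ≠ 0) (h1 : x ≠ 1) :
    HasDerivAt Hb ((Real.log (1 - x) - Real.log x) / Real.log 2) x := by
  have : Hb = fun x => Real.binEntropy x / Real.log 2 := funext Hb_eq
  rw [this]
  exact (Real.hasDerivAt_binEntropy h0 h1).div_const _

lemma Hb_mem {x : ℝ} (hx : x ∈ Icc (0:ℝ) (1/2)) : Hb x ∈ Icc (0:ℝ) 1 :=
  ⟨Hb_nonneg hx.1 (by linarith [hx.2]), Hb_le_one x⟩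

noncomputable def Lf (x : ℝ) : ℝ := Real.log (1 - x) - Real.log x
noncomputable def kf (x : ℝ) : ℝ := x * (1 - x) * Lf x
noncomputable def kf1 (x : ℝ) : ℝ := (1 - 2*x) * Lf x - 1
noncomputable def kf2 (x : ℝ) : ℝ := -2 * Lf x - (1 - 2*x)/(x*(1-x))
noncomputable def rf (p x : ℝ) : ℝ := (1 - 2*p) * Lf (p + (1 - 2*p)*x) / Lf x

lemma Lf_hasDerivAt {x : ℝ} (h0 : x ≠ 0) (h1 : x ≠ 1) :
    HasDerivAt Lf (-(1-x)⁻¹ - x⁻¹) x := by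
  have hl : HasDerivAt (fun y : ℝ => Real.log (1 - y)) (-(1-x)⁻¹) x := by
    have hinner : HasDerivAt (fun y : ℝ => 1 - y) (-1) x := by
      simpa using (hasDerivAt_id x).const_sub 1
    have := (Real.hasDerivAt_log (sub_ne_zero.mpr (Ne.symm h1))).comp x hinner
    exact this.congr_deriv (by ring)
  exact hl.sub (Real.hasDerivAt_log h0)

lemma Lf_nonneg {x : ℝ} (h0 : 0 < x) (h1 : x ≤ 1/2) : 0 ≤ Lf x :=
  sub_nonneg.mpr (Real.log_le_log h0 (by linarith))

lemma Lf_pos {x : ℝ} (h0 : 0 < x) (h1 : x < 1/2) : 0 < Lf x :=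
  sub_pos.mpr (Real.log_lt_log h0 (by linarith))

lemma kf_continuous : Continuous kf := by
  have : kf = fun x => x * ((1-x) * Real.log (1-x)) - (1-x) * (x * Real.log x) := by
    funext x; unfold kf Lf; ring
  rw [this]
  have h1 : Continuous fun x : ℝ => (1-x) * Real.log (1-x) :=
    Real.continuous_mul_log.comp (continuous_const.sub continuous_id)
  have h2 : Continuous fun x : ℝ => x * Real.log x := Real.continuous_mul_log
  exact ((continuous_id.mul h1).sub ((continuous_const.sub continuous_id).mul h2))

lemma kf_half : kf (1/2) = 0 := by norm_num [kf, Lf]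

lemma kf_hasDerivAt {x : ℝ} (h0 : x ≠ 0) (h1 : x ≠ 1) : HasDerivAt kf (kf1 x) x := by
  have hq : HasDerivAt (fun y : ℝ => y * (1 - y)) (1 - 2*x) x := by
    have := (hasDerivAt_id x).mul ((hasDerivAt_id x).const_sub 1)
    refine this.congr_deriv ?_; simp; ring
  have := hq.mul (Lf_hasDerivAt h0 h1)
  refine this.congr_deriv ?_
  unfold kf1
  have hx1 : (1:ℝ) - x ≠ 0 := sub_ne_zero.mpr (Ne.symm h1)
  field_simp
  ring

lemma kf1_hasDerivAt {x : ℝ} (h0 : x ≠ 0) (h1 : x ≠ 1) : HasDerivAt kf1 (kf2 x) x := by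
  have hq : HasDerivAt (fun y : ℝ => 1 - 2*y) (-2) x := by
    simpa using ((hasDerivAt_id x).const_mul 2).const_sub 1
  have := (hq.mul (Lf_hasDerivAt h0 h1)).sub_const 1
  refine this.congr_deriv ?_
  unfold kf2
  have hx1 : (1:ℝ) - x ≠ 0 := sub_ne_zero.mpr (Ne.symm h1)
  field_simp
  ring

lemma kf_concave : ConcaveOn ℝ (Icc 0 (1/2)) kf := by
  apply concaveOn_of_hasDerivWithinAt2_nonpos (f' := kf1) (f'' := kf2)
    (convex_Icc _ _) kf_continuous.continuousOn
  · intro x hx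
    rw [interior_Icc] at hx
    exact (kf_hasDerivAt (ne_of_gt hx.1) (by linarith [hx.2])).hasDerivWithinAt
  · intro x hx
    rw [interior_Icc] at hx
    exact (kf1_hasDerivAt (ne_of_gt hx.1) (by linarith [hx.2])).hasDerivWithinAt
  · intro x hx
    rw [interior_Icc] at hx
    unfold kf2
    have h1 : 0 ≤ Lf x := Lf_nonneg hx.1 hx.2.le
    have h2 : 0 ≤ (1 - 2*x)/(x*(1-x)) :=
      div_nonneg (by linarith [hx.2]) (by nlinarith [hx.1, hx.2])
    linarith

lemma klemma {p x : ℝ} (hp0 : 0 ≤ p) (hp2 : p ≤ 1/2) (hx : x ∈ Icc (0:ℝ) (1/2)) :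
    (1 - 2*p) * kf x ≤ kf (p + (1 - 2*p)*x) := by
  have h := kf_concave.2 hx (by constructor <;> norm_num : (1:ℝ)/2 ∈ Icc (0:ℝ) (1/2))
    (by linarith : (0:ℝ) ≤ 1 - 2*p) (by linarith : (0:ℝ) ≤ 2*p) (by ring)
  simp only [smul_eq_mul] at h
  rw [kf_half] at h
  have harg : (1 - 2*p) * x + 2*p * (1/2) = p + (1 - 2*p)*x := by ring
  rw [harg] at h
  linarith

lemma y_mem {p x : ℝ} (hp0 : 0 ≤ p) (hp2 : p < 1/2) (hx : x ∈ Ioo (0:ℝ) (1/2)) :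
    p + (1 - 2*p)*x ∈ Ioo (0:ℝ) (1/2) := by
  constructor
  · nlinarith [hx.1]
  · nlinarith [hx.2]

lemma rf_hasDerivAt {p x : ℝ} (hp0 : 0 ≤ p) (hp2 : p < 1/2) (hx : x ∈ Ioo (0:ℝ) (1/2)) :
    HasDerivAt (rf p)
      (((1 - 2*p) * ((-(1-(p + (1 - 2*p)*x))⁻¹ - (p + (1 - 2*p)*x)⁻¹) * (1 - 2*p)) * Lf x
        - (1 - 2*p) * Lf (p + (1 - 2*p)*x) * (-(1-x)⁻¹ - x⁻¹)) / (Lf x)^2) x := by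
  set y := p + (1 - 2*p)*x with hy
  have hym := y_mem hp0 hp2 hx
  have hyd : HasDerivAt (fun t : ℝ => Lf (p + (1 - 2*p)*t)) ((-(1-y)⁻¹ - y⁻¹) * (1 - 2*p)) x := by
    have hinner : HasDerivAt (fun t : ℝ => p + (1 - 2*p)*t) (1 - 2*p) x := by
      simpa using ((hasDerivAt_id x).const_mul (1 - 2*p)).const_add p
    exact (Lf_hasDerivAt (ne_of_gt hym.1) (by linarith [hym.2])).comp x hinner
  have hN : HasDerivAt (fun t : ℝ => (1 - 2*p) * Lf (p + (1 - 2*p)*t))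
      ((1 - 2*p) * ((-(1-y)⁻¹ - y⁻¹) * (1 - 2*p))) x := hyd.const_mul _
  have hD : HasDerivAt Lf (-(1-x)⁻¹ - x⁻¹) x :=
    Lf_hasDerivAt (ne_of_gt hx.1) (by linarith [hx.2])
  have hDne : Lf x ≠ 0 := ne_of_gt (Lf_pos hx.1 hx.2)
  exact hN.div hD hDne

lemma rf_deriv_nonneg {p x : ℝ} (hp0 : 0 ≤ p) (hp2 : p < 1/2) (hx : x ∈ Ioo (0:ℝ) (1/2)) :
    0 ≤ deriv (rf p) x := by
  rw [(rf_hasDerivAt hp0 hp2 hx).deriv]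
  set y := p + (1 - 2*p)*x with hy
  have hym := y_mem hp0 hp2 hx
  apply div_nonneg _ (sq_nonneg _)
  have hkey : (1 - 2*p) * ((1 - 2*p) * kf x) ≤ (1 - 2*p) * kf y :=
    mul_le_mul_of_nonneg_left (klemma hp0 hp2.le ⟨hx.1.le, hx.2.le⟩) (by linarith)
  have hx0 : x ≠ 0 := ne_of_gt hx.1
  have hx1 : (1:ℝ) - x ≠ 0 := by have := hx.2; intro h; linarith
  have hy0 : y ≠ 0 := ne_of_gt hym.1
  have hy1 : (1:ℝ) - y ≠ 0 := by have := hym.2; intro h; linarith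
  have heq : (1 - 2*p) * ((-(1-y)⁻¹ - y⁻¹) * (1 - 2*p)) * Lf x
        - (1 - 2*p) * Lf y * (-(1-x)⁻¹ - x⁻¹)
      = ((1 - 2*p) * kf y - (1 - 2*p) * ((1 - 2*p) * kf x)) / (x*(1-x)*(y*(1-y))) := by
    unfold kf
    field_simp
    ring
  rw [heq]
  apply div_nonneg (by linarith)
  have h1 : 0 < x*(1-x) := by nlinarith [hx.1, hx.2]
  have h2 : 0 < y*(1-y) := by nlinarith [hym.1, hym.2]
  positivity

lemma rf_mono {p : ℝ} (hp0 : 0 ≤ p) (hp2 : p < 1/2) : MonotoneOn (rf p) (Ioo 0 (1/2)) := by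
  have hdiff : DifferentiableOn ℝ (rf p) (Ioo 0 (1/2)) := fun x hx =>
    (rf_hasDerivAt hp0 hp2 hx).differentiableAt.differentiableWithinAt
  apply monotoneOn_of_deriv_nonneg (convex_Ioo _ _) hdiff.continuousOn
  · rw [interior_Ioo]; exact hdiff
  · rw [interior_Ioo]; exact fun x hx => rf_deriv_nonneg hp0 hp2 hx

section G
variable {g : ℝ → ℝ} (hg : ∀ y ∈ Set.Icc (0:ℝ) 1, g y ∈ Set.Icc (0:ℝ) (1/2) ∧ Hb (g y) = y)

include hg in
lemma g_right_inv {x : ℝ} (hx : x ∈ Icc (0:ℝ) (1/2)) : g (Hb x) = x := by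
  obtain ⟨hmem, hHb⟩ := hg _ (Hb_mem hx)
  exact Hb_strictMonoOn.injOn hmem hx hHb

include hg in
lemma g_mono : StrictMonoOn g (Icc (0:ℝ) 1) := by
  intro t1 h1 t2 h2 hlt
  by_contra hle
  push_neg at hle
  have := (Hb_strictMonoOn.le_iff_le (hg _ h2).1 (hg _ h1).1).mpr hle
  rw [(hg _ h2).2, (hg _ h1).2] at this
  linarith

include hg in
lemma g_cont : ContinuousOn g (Icc (0:ℝ) 1) := by
  have hbd : ∀ x : Icc (0:ℝ) (1/2), Hb x.1 ∈ Icc (0:ℝ) 1 := fun x => Hb_mem x.2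
  let e : Icc (0:ℝ) (1/2) → Icc (0:ℝ) 1 := fun x => ⟨Hb x.1, hbd x⟩
  have hecont : Continuous e :=
    Continuous.subtype_mk (Hb_continuous.comp continuous_subtype_val) _
  have hbij : Function.Bijective e := by
    constructor
    · intro x y hxy
      exact Subtype.ext (Hb_strictMonoOn.injOn x.2 y.2 (congrArg Subtype.val hxy))
    · intro y
      refine ⟨⟨g y.1, (hg _ y.2).1⟩, Subtype.ext ?_⟩
      exact (hg _ y.2).2
  let E : Icc (0:ℝ) (1/2) ≃ Icc (0:ℝ) 1 := Equiv.ofBijective e hbij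
  have hEcont : Continuous E := hecont
  let homeo := hEcont.homeoOfEquivCompactToT2
  have hsymm : ∀ t : Icc (0:ℝ) 1, (homeo.symm t).1 = g t.1 := by
    intro t
    have h0 : homeo ⟨g t.1, (hg _ t.2).1⟩ = t := Subtype.ext (hg _ t.2).2
    have h1 : homeo.symm t = ⟨g t.1, (hg _ t.2).1⟩ := by
      apply homeo.injective
      rw [Homeomorph.apply_symm_apply]
      exact h0.symm
    rw [h1]
  rw [continuousOn_iff_continuous_restrict]
  have : (Icc (0:ℝ) 1).restrict g = fun t => (homeo.symm t).1 := by
    funext t; exact (hsymm t).symm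
  show Continuous ((Icc (0:ℝ) 1).restrict g); rw [this]
  exact continuous_subtype_val.comp homeo.symm.continuous

include hg in
lemma g_mem_Ioo {t : ℝ} (ht : t ∈ Ioo (0:ℝ) 1) : g t ∈ Ioo (0:ℝ) (1/2) := by
  have htIcc : t ∈ Icc (0:ℝ) 1 := ⟨ht.1.le, ht.2.le⟩
  obtain ⟨⟨h1, h2⟩, hHb⟩ := hg _ htIcc
  constructor
  · rcases eq_or_lt_of_le h1 with h | h
    · exfalso
      rw [← h, Hb_zero] at hHb
      linarith [ht.1]
    · exact h
  · rcases eq_or_lt_of_le h2 with h | h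
    · exfalso
      rw [h, Hb_half] at hHb
      linarith [ht.2]
    · exact h

variable {p : ℝ} (hp0 : 0 ≤ p) (hp2 : p < 1/2)

include hg hp0 hp2 in
lemma psi_strictMono : StrictMonoOn (fun t => Hb (p + (1 - 2*p) * g t)) (Icc (0:ℝ) 1) := by
  intro t1 h1 t2 h2 hlt
  have hg1 := (hg _ h1).1
  have hg2 := (hg _ h2).1
  have hglt : g t1 < g t2 := g_mono hg h1 h2 hlt
  have m1 : p + (1 - 2*p) * g t1 ∈ Icc (0:ℝ) (1/2) := by
    constructor
    · nlinarith [hg1.1]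
    · nlinarith [hg1.2]
  have m2 : p + (1 - 2*p) * g t2 ∈ Icc (0:ℝ) (1/2) := by
    constructor
    · nlinarith [hg2.1]
    · nlinarith [hg2.2]
  exact Hb_strictMonoOn m1 m2 (by nlinarith)

include hg hp0 hp2 in
lemma psi_hasDerivAt {t : ℝ} (ht : t ∈ Ioo (0:ℝ) 1) :
    HasDerivAt (fun t => Hb (p + (1 - 2*p) * g t)) (rf p (g t)) t := by
  have htIcc : t ∈ Icc (0:ℝ) 1 := ⟨ht.1.le, ht.2.le⟩
  have hgm := (hg _ htIcc).1
  have hx : g t ∈ Ioo (0:ℝ) (1/2) := g_mem_Ioo hg ht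
  have hx0 : g t ≠ 0 := ne_of_gt hx.1
  have hLx : 0 < Lf (g t) := Lf_pos hx.1 hx.2
  have hHb' : HasDerivAt Hb (Lf (g t) / Real.log 2) (g t) :=
    Hb_hasDerivAt hx0 (by intro h; have := hx.2; rw [h] at this; norm_num at this)
  have hderivne : Lf (g t) / Real.log 2 ≠ 0 :=
    ne_of_gt (div_pos hLx log2_pos)
  have hgct : ContinuousAt g t :=
    (g_cont hg).continuousAt (Icc_mem_nhds ht.1 ht.2)
  have hev : ∀ᶠ y in nhds t, Hb (g y) = y := by
    filter_upwards [Icc_mem_nhds ht.1 ht.2] with y hy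
    exact (hg _ hy).2
  have hgd : HasDerivAt g (Lf (g t) / Real.log 2)⁻¹ t :=
    HasDerivAt.of_local_left_inverse hgct hHb' hderivne hev
  have hinner : HasDerivAt (fun t => p + (1 - 2*p) * g t)
      ((1 - 2*p) * (Lf (g t) / Real.log 2)⁻¹) t := (hgd.const_mul _).const_add p
  have hym := y_mem hp0 hp2 hx
  have hHby : HasDerivAt Hb (Lf (p + (1 - 2*p) * g t) / Real.log 2) (p + (1 - 2*p) * g t) :=
    Hb_hasDerivAt (ne_of_gt hym.1) (by intro h; have := hym.2; rw [h] at this; norm_num at this)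
  have := hHby.comp t hinner
  refine this.congr_deriv ?_
  unfold rf
  have hl2 : Real.log 2 ≠ 0 := ne_of_gt log2_pos
  field_simp

include hg hp0 hp2 in
lemma psi_convex : ConvexOn ℝ (Icc (0:ℝ) 1) (fun t => Hb (p + (1 - 2*p) * g t)) := by
  apply MonotoneOn.convexOn_of_deriv (convex_Icc _ _)
  · exact Hb_continuous.comp_continuousOn
      (continuousOn_const.add (continuousOn_const.mul (g_cont hg)))
  · rw [interior_Icc]
    intro t ht
    exact (psi_hasDerivAt hg hp0 hp2 ht).differentiableAt.differentiableWithinAt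
  · rw [interior_Icc]
    intro t1 h1 t2 h2 hle
    rw [(psi_hasDerivAt hg hp0 hp2 h1).deriv, (psi_hasDerivAt hg hp0 hp2 h2).deriv]
    have hx1 : g t1 ∈ Ioo (0:ℝ) (1/2) := g_mem_Ioo hg h1
    have hx2 : g t2 ∈ Ioo (0:ℝ) (1/2) := g_mem_Ioo hg h2
    exact rf_mono hp0 hp2 hx1 hx2
      ((g_mono hg).monotoneOn ⟨h1.1.le, h1.2.le⟩ ⟨h2.1.le, h2.2.le⟩ hle)

end G

/-! ### Probability lemmas -/

section Prob
variable {Ω : Type} [Fintype Ω] (μ : FinProb Ω)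

lemma pmfOf_nonneg {α : Type} [DecidableEq α] (X : Ω → α) (a : α) : 0 ≤ pmfOf μ X a :=
  Finset.sum_nonneg fun ω _ => by split <;> simp [μ.nonneg ω]

lemma pmfOf_total {α : Type} [Fintype α] [DecidableEq α] (X : Ω → α) :
    ∑ a, pmfOf μ X a = 1 := by
  unfold pmfOf
  rw [Finset.sum_comm]
  rw [← μ.sum_one]
  apply Finset.sum_congr rfl
  intro ω _
  simp

lemma pmf_swap {α β : Type} [DecidableEq α] [DecidableEq β] (X : Ω → α) (Y : Ω → β)
    (a : α) (b : β) :
    pmfOf μ (fun ω => (Y ω, X ω)) (b, a) = pmfOf μ (fun ω => (X ω, Y ω)) (a, b) := by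
  unfold pmfOf
  apply Finset.sum_congr rfl
  intro ω _
  by_cases h1 : X ω = a <;> by_cases h2 : Y ω = b <;> simp [h1, h2]

lemma pmf_split_bool {α : Type} [DecidableEq α] (X : Ω → α) (W : Ω → Bool) (a : α) :
    pmfOf μ X a = pmfOf μ (fun ω => (X ω, W ω)) (a, true)
      + pmfOf μ (fun ω => (X ω, W ω)) (a, false) := by
  unfold pmfOf
  rw [← Finset.sum_add_distrib]
  apply Finset.sum_congr rfl
  intro ω _
  by_cases h1 : X ω = a <;> cases hw : W ω <;> simp [h1, hw]

lemma pmf_split_mid {α β : Type} [DecidableEq α] [DecidableEq β]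
    (X : Ω → α) (W : Ω → Bool) (Y : Ω → β) (a : α) (b : β) :
    pmfOf μ (fun ω => (X ω, Y ω)) (a, b)
      = pmfOf μ (fun ω => (X ω, W ω, Y ω)) (a, true, b)
      + pmfOf μ (fun ω => (X ω, W ω, Y ω)) (a, false, b) := by
  unfold pmfOf
  rw [← Finset.sum_add_distrib]
  apply Finset.sum_congr rfl
  intro ω _
  by_cases h1 : X ω = a <;> by_cases h2 : Y ω = b <;> cases hw : W ω <;> simp [h1, h2, hw]

lemma pmf_triple_le {α β γ : Type} [DecidableEq α] [DecidableEq β] [DecidableEq γ]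
    (X : Ω → α) (Y : Ω → β) (Z : Ω → γ) (a : α) (b : β) (c : γ) :
    pmfOf μ (fun ω => (X ω, Y ω, Z ω)) (a, b, c) ≤ pmfOf μ Y b := by
  apply Finset.sum_le_sum
  intro ω _
  by_cases h1 : X ω = a <;> by_cases h2 : Y ω = b <;> by_cases h3 : Z ω = c <;>
    simp [h1, h2, h3, μ.nonneg ω, le_refl]

lemma pmf_pair_le_right {α β : Type} [DecidableEq α] [DecidableEq β]
    (X : Ω → α) (Y : Ω → β) (a : α) (b : β) :
    pmfOf μ (fun ω => (X ω, Y ω)) (a, b) ≤ pmfOf μ Y b := by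
  apply Finset.sum_le_sum
  intro ω _
  by_cases h1 : X ω = a <;> by_cases h2 : Y ω = b <;>
    simp [h1, h2, μ.nonneg ω, le_refl]

lemma perU {s t : ℝ} (hs : 0 ≤ s) (ht : 0 ≤ t) :
    (s + t) * Real.logb 2 (s + t) - (s * Real.logb 2 s + t * Real.logb 2 t)
      = (s + t) * Hb (s / (s + t)) := by
  rcases eq_or_lt_of_le (by linarith : (0:ℝ) ≤ s + t) with hq | hq
  · have hs0 : s = 0 := by linarith
    have ht0 : t = 0 := by linarith
    simp [hs0, ht0, Hb]
  · rcases eq_or_lt_of_le hs with hs0 | hs0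
    · have : s = 0 := hs0.symm
      subst this
      simp [Hb_zero, Hb]
    · rcases eq_or_lt_of_le ht with ht0 | ht0
      · have : t = 0 := ht0.symm
        subst this
        have : s / (s + 0) = 1 := by rw [add_zero]; exact div_self (ne_of_gt hs0)
        rw [this, Hb_one]
        simp
      · have hq0 : s + t ≠ 0 := ne_of_gt hq
        have h1 : Real.logb 2 (s / (s + t)) = Real.logb 2 s - Real.logb 2 (s + t) :=
          Real.logb_div (ne_of_gt hs0) hq0
        have h2 : (1 : ℝ) - s / (s + t) = t / (s + t) := by field_simp; ring
        have h3 : Real.logb 2 (t / (s + t)) = Real.logb 2 t - Real.logb 2 (s + t) :=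
          Real.logb_div (ne_of_gt ht0) hq0
        unfold Hb
        rw [h1, h2, h3]
        field_simp
        ring

lemma condH2_bool {U' : Type} [Fintype U'] [DecidableEq U'] (W : Ω → Bool) (U : Ω → U') :
    condH2 μ W U = ∑ u, pmfOf μ U u
      * Hb (pmfOf μ (fun ω => (U ω, W ω)) (u, true) / pmfOf μ U u) := by
  unfold condH2 H2
  rw [Fintype.sum_prod_type, Fintype.sum_bool]
  rw [neg_sub_neg (α := ℝ)]
  rw [← Finset.sum_add_distrib, ← Finset.sum_sub_distrib]
  apply Finset.sum_congr rfl
  intro u _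
  have hsplit := pmf_split_bool μ U W u
  have hswapT := pmf_swap μ U W u true
  have hswapF := pmf_swap μ U W u false
  rw [hswapT, hswapF, hsplit]
  have := perU (s := pmfOf μ (fun ω => (U ω, W ω)) (u, true))
    (t := pmfOf μ (fun ω => (U ω, W ω)) (u, false))
    (pmfOf_nonneg μ _ _) (pmfOf_nonneg μ _ _)
  linarith [this]

end Prob

/-! ### Core inequality (inverted Mrs. Gerber's lemma) -/

noncomputable def xsel {U' : Type} (s q : U' → ℝ) (u : U') : ℝ :=
  if s u / q u ≤ 1/2 then s u / q u else 1 - s u / q u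

lemma xsel_Hb {U' : Type} (s q : U' → ℝ) (u : U') : Hb (xsel s q u) = Hb (s u / q u) := by
  unfold xsel
  split
  · rfl
  · exact Hb_symm _

lemma core1 {U' : Type} [Fintype U'] {p : ℝ} (hp0 : 0 ≤ p) (hp2 : p < 1/2)
    {g : ℝ → ℝ} (hg : ∀ y ∈ Set.Icc (0:ℝ) 1, g y ∈ Set.Icc (0:ℝ) (1/2) ∧ Hb (g y) = y)
    (q s t : U' → ℝ) (hs : ∀ u, 0 ≤ s u) (ht : ∀ u, 0 ≤ t u)
    (hq : ∀ u, q u = s u + t u) (hqsum : ∑ u, q u = 1)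
    {h : ℝ} (hhval : h = ∑ u, q u * Hb ((s u * (1 - p) + t u * p) / q u))
    (hh : h ∈ Set.Icc (Hb p) 1) :
    ∑ u, q u * Hb (s u / q u) ≤ Hb ((g h - p) / (1 - 2 * p)) := by
  have hpne : (0:ℝ) < 1 - 2*p := by linarith
  have hq0 : ∀ u, 0 ≤ q u := fun u => by rw [hq u]; exact add_nonneg (hs u) (ht u)
  have ha_mem : ∀ u, s u / q u ∈ Icc (0:ℝ) 1 := by
    intro u
    rcases eq_or_lt_of_le (hq0 u) with hqu | hqu
    · rw [← hqu, div_zero]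
      exact ⟨le_rfl, by norm_num⟩
    · have hs_le : s u ≤ q u := by rw [hq u]; linarith [ht u]
      exact ⟨div_nonneg (hs u) (hq0 u), (div_le_one hqu).mpr hs_le⟩
  have hx_mem : ∀ u, xsel s q u ∈ Icc (0:ℝ) (1/2) := by
    intro u
    obtain ⟨ha0, ha1⟩ := ha_mem u
    unfold xsel
    by_cases hle : s u / q u ≤ 1/2
    · rw [if_pos hle]
      exact ⟨ha0, hle⟩
    · rw [if_neg hle]
      push_neg at hle
      constructor
      · linarith
      · linarith
  have step1 : ∑ u, q u * Hb (s u / q u) = ∑ u, q u * Hb (xsel s q u) :=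
    Finset.sum_congr rfl fun u _ => by rw [xsel_Hb]
  have step2 : h = ∑ u, q u * Hb (p + (1 - 2*p) * xsel s q u) := by
    rw [hhval]
    refine Finset.sum_congr rfl fun u _ => ?_
    rcases eq_or_lt_of_le (hq0 u) with hqu | hqu
    · rw [← hqu, zero_mul, zero_mul]
    · have htq : t u = q u - s u := by rw [hq u]; ring
      have harg : (s u * (1 - p) + t u * p) / q u = p + (1 - 2*p) * (s u / q u) := by
        rw [htq]
        field_simp
        ring
      rw [harg]
      unfold xsel
      split
      · rfl
      · have heq : p + (1 - 2*p) * (s u / q u)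
            = 1 - (p + (1 - 2*p) * (1 - s u / q u)) := by ring
        rw [heq, Hb_symm]
  -- Jensen's inequality for the convex function ψ
  have hjen := (psi_convex hg hp0 hp2).map_sum_le (t := Finset.univ)
    (w := q) (p := fun u => Hb (xsel s q u)) (fun u _ => hq0 u) hqsum
    (fun u _ => Hb_mem (hx_mem u))
  simp only [smul_eq_mul] at hjen
  have hR : ∑ u, q u * Hb (p + (1 - 2*p) * g (Hb (xsel s q u))) = h := by
    rw [step2]
    exact Finset.sum_congr rfl fun u _ => by rw [g_right_inv hg (hx_mem u)]
  rw [step1]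
  set A := ∑ u, q u * Hb (xsel s q u) with hA_def
  have hA0 : 0 ≤ A :=
    Finset.sum_nonneg fun u _ => mul_nonneg (hq0 u) (Hb_mem (hx_mem u)).1
  have hA1 : A ≤ 1 := by
    rw [hA_def]
    calc ∑ u, q u * Hb (xsel s q u) ≤ ∑ u, q u * 1 :=
          Finset.sum_le_sum fun u _ => mul_le_mul_of_nonneg_left (Hb_le_one _) (hq0 u)
      _ = 1 := by simp [hqsum]  -- careful
  have hpsiA_le : Hb (p + (1 - 2*p) * g A) ≤ h := le_of_le_of_eq hjen hR
  have h0 : 0 ≤ h := le_trans (Hb_nonneg hp0 (by linarith)) hh.1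
  have h1 : h ≤ 1 := hh.2
  obtain ⟨ghm, gHbh⟩ := hg h ⟨h0, h1⟩
  have hpgh : p ≤ g h := by
    by_contra hlt
    push_neg at hlt
    have := Hb_strictMonoOn ghm ⟨hp0, hp2.le⟩ hlt
    rw [gHbh] at this
    linarith [hh.1]
  have hz0 : 0 ≤ (g h - p) / (1 - 2*p) := div_nonneg (by linarith) hpne.le
  have hz2 : (g h - p) / (1 - 2*p) ≤ 1/2 := by
    rw [div_le_iff₀ hpne]
    nlinarith [ghm.2]
  have hbz : p + (1 - 2*p) * ((g h - p) / (1 - 2*p)) = g h := by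
    rw [mul_div_assoc', mul_div_cancel_left₀ _ hpne.ne']; ring
  have hpsiz : Hb (p + (1 - 2*p) * g (Hb ((g h - p) / (1 - 2*p)))) = h := by
    rw [g_right_inv hg ⟨hz0, hz2⟩, hbz, gHbh]
  refine ((psi_strictMono hg hp0 hp2).le_iff_le ⟨hA0, hA1⟩ (Hb_mem ⟨hz0, hz2⟩)).mp ?_
  show Hb (p + (1 - 2*p) * g A) ≤ Hb (p + (1 - 2*p) * g (Hb ((g h - p) / (1 - 2*p))))
  rw [hpsiz]
  exact hpsiA_le

/-! ### Main theorem -/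

theorem bsc_reverse_optimal {Ω U' : Type} [Fintype Ω] [Fintype U'] [DecidableEq U']
    (μ : FinProb Ω) (U : Ω → U') (Xt X : Ω → Bool) (p : ℝ)
    (hp : p ∈ Set.Ico (0:ℝ) (1/2))
    (hX : ∀ x, pmfOf μ X x = 1/2)
    (hrev : ∀ xt x, pmfOf μ (fun ω => (Xt ω, X ω)) (xt, x) =
      pmfOf μ Xt xt * (if x = xt then 1 - p else p))
    (hmarkov : Markov3 μ U Xt X)
    (g : ℝ → ℝ) (hg : ∀ y ∈ Set.Icc (0:ℝ) 1, g y ∈ Set.Icc (0:ℝ) (1/2) ∧ Hb (g y) = y)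
    (hh : condH2 μ X U ∈ Set.Icc (Hb p) 1) :
    condH2 μ Xt U ≤ Hb ((g (condH2 μ X U) - p) / (1 - 2 * p)) ∧
    (∀ c : U' → Bool,
      (∀ u, pmfOf μ (fun ω => (U ω, Xt ω)) (u, !(c u)) =
        pmfOf μ U u * ((g (condH2 μ X U) - p) / (1 - 2 * p))) →
      condH2 μ Xt U = Hb ((g (condH2 μ X U) - p) / (1 - 2 * p))) := by
  obtain ⟨hp0, hp2⟩ := hp
  have hq0 : ∀ u, 0 ≤ pmfOf μ U u := fun u => pmfOf_nonneg μ U u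
  have hs0 : ∀ u, 0 ≤ pmfOf μ (fun ω => (U ω, Xt ω)) (u, true) :=
    fun u => pmfOf_nonneg μ _ _
  have ht0 : ∀ u, 0 ≤ pmfOf μ (fun ω => (U ω, Xt ω)) (u, false) :=
    fun u => pmfOf_nonneg μ _ _
  have hqst : ∀ u, pmfOf μ U u = pmfOf μ (fun ω => (U ω, Xt ω)) (u, true)
      + pmfOf μ (fun ω => (U ω, Xt ω)) (u, false) := fun u => pmf_split_bool μ U Xt u
  have htrip : ∀ u b xx, pmfOf μ (fun ω => (U ω, Xt ω, X ω)) (u, b, xx)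
      = pmfOf μ (fun ω => (U ω, Xt ω)) (u, b) * (if xx = b then 1 - p else p) := by
    intro u b xx
    by_cases hb : pmfOf μ Xt b = 0
    · have h1 : pmfOf μ (fun ω => (U ω, Xt ω, X ω)) (u, b, xx) = 0 :=
        le_antisymm (hb ▸ pmf_triple_le μ U Xt X u b xx) (pmfOf_nonneg μ _ _)
      have h2 : pmfOf μ (fun ω => (U ω, Xt ω)) (u, b) = 0 :=
        le_antisymm (hb ▸ pmf_pair_le_right μ U Xt u b) (pmfOf_nonneg μ _ _)
      rw [h1, h2, zero_mul]
    · have hm := hmarkov u b xx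
      rw [hrev b xx] at hm
      apply mul_right_cancel₀ hb
      rw [hm]
      ring
  have hUXtrue : ∀ u, pmfOf μ (fun ω => (U ω, X ω)) (u, true)
      = pmfOf μ (fun ω => (U ω, Xt ω)) (u, true) * (1 - p)
        + pmfOf μ (fun ω => (U ω, Xt ω)) (u, false) * p := by
    intro u
    rw [pmf_split_mid μ U Xt X u true, htrip u true true, htrip u false true]
    norm_num
  have hXU : condH2 μ X U = ∑ u, pmfOf μ U u * Hb
      ((pmfOf μ (fun ω => (U ω, Xt ω)) (u, true) * (1 - p)
        + pmfOf μ (fun ω => (U ω, Xt ω)) (u, false) * p) / pmfOf μ U u) := by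
    rw [condH2_bool μ X U]
    exact Finset.sum_congr rfl fun u _ => by rw [hUXtrue u]
  constructor
  · rw [condH2_bool μ Xt U]
    exact core1 hp0 hp2 hg (fun u => pmfOf μ U u)
      (fun u => pmfOf μ (fun ω => (U ω, Xt ω)) (u, true))
      (fun u => pmfOf μ (fun ω => (U ω, Xt ω)) (u, false))
      hs0 ht0 hqst (pmfOf_total μ U) hXU hh
  · intro c hc
    rw [condH2_bool μ Xt U]
    have hstep : ∀ u, pmfOf μ U u
          * Hb (pmfOf μ (fun ω => (U ω, Xt ω)) (u, true) / pmfOf μ U u)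
        = pmfOf μ U u * Hb ((g (condH2 μ X U) - p) / (1 - 2 * p)) := by
      intro u
      rcases eq_or_lt_of_le (hq0 u) with hqu | hqu
      · rw [← hqu, zero_mul, zero_mul]
      · have h1 := hc u
        cases hcv : c u
        · rw [hcv] at h1
          simp only [Bool.not_false] at h1
          rw [h1, mul_div_cancel_left₀ _ (ne_of_gt hqu)]
        · rw [hcv] at h1
          simp only [Bool.not_true] at h1
          have h2 := hqst u
          rw [h1] at h2
          have hsu : pmfOf μ (fun ω => (U ω, Xt ω)) (u, true)
              = pmfOf μ U u * (1 - (g (condH2 μ X U) - p) / (1 - 2 * p)) := by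
            linear_combination -h2
          rw [hsu, mul_div_cancel_left₀ _ (ne_of_gt hqu), Hb_symm]
    calc ∑ u, pmfOf μ U u
          * Hb (pmfOf μ (fun ω => (U ω, Xt ω)) (u, true) / pmfOf μ U u)
        = ∑ u, pmfOf μ U u * Hb ((g (condH2 μ X U) - p) / (1 - 2 * p)) :=
          Finset.sum_congr rfl fun u _ => hstep u
      _ = Hb ((g (condH2 μ X U) - p) / (1 - 2 * p)) := by
          rw [← Finset.sum_mul, pmfOf_total μ U, one_mul]
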